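/- Let α ∈ ℂ⁴ and let N ≥ 1 be an integer. Define F_N : ℝ³ → ℂ by F_N(p) = (2/(|p|²+1))² (α·ω(p))^N. Then for all p ∈ ℝ³, (L̃₃ F_N)(p) = −i·N·(α₁p₂ − α₂p₁)·(2/(|p|²+1))³·(α·ω(p))^{N−1}, where (L̃₃ g)(p) = −i(p₂ ∂g/∂p₁(p) − p₁ ∂g/∂p₂(p)). -/

import Mathlib

/-- `|p|²` on `Fin 3 → ℝ`. -/
noncomputable def normSq3 (p : Fin 3 → ℝ) : ℝ := p 0 ^ 2 + p 1 ^ 2 + p 2 ^ 2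

/-- The inverse stereographic projection `ω : ℝ³ → ℝ⁴`. -/
noncomputable def stereoInv (p : Fin 3 → ℝ) : Fin 4 → ℝ :=
  ![2 * p 0 / (normSq3 p + 1), 2 * p 1 / (normSq3 p + 1), 2 * p 2 / (normSq3 p + 1),
    (normSq3 p - 1) / (normSq3 p + 1)]

/-- `α·ω(p) = Σⱼ αⱼ ωⱼ(p)` (bilinear, no conjugation). -/
noncomputable def adotom (α : Fin 4 → ℂ) (p : Fin 3 → ℝ) : ℂ :=
  ∑ j, α j * (stereoInv p j : ℂ)

/-- The angular momentum operator in momentum space: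
`(L̃₃ g)(p) = −i(p₂ ∂g/∂p₁(p) − p₁ ∂g/∂p₂(p))`. -/
noncomputable def L3tilde (g : (Fin 3 → ℝ) → ℂ) (p : Fin 3 → ℝ) : ℂ :=
  -Complex.I * ((p 1 : ℂ) * fderiv ℝ g p (Pi.single 0 1)
    - (p 0 : ℂ) * fderiv ℝ g p (Pi.single 1 1))

open ContinuousLinearMap
set_option maxHeartbeats 1000000 in
/-- for `F_N(p) = (2/(|p|²+1))² (α·ω(p))^N`,
`(L̃₃F_N)(p) = −iN(α₁p₂−α₂p₁)(2/(|p|²+1))³(α·ω(p))^{N−1}`. -/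
theorem stmt10 (α : Fin 4 → ℂ) (N : ℕ) (hN : 1 ≤ N) (p : Fin 3 → ℝ) :
    L3tilde (fun q => ((2 / (normSq3 q + 1) : ℝ) : ℂ) ^ 2 * adotom α q ^ N) p =
      -Complex.I * (N : ℂ) * (α 0 * (p 1 : ℂ) - α 1 * (p 0 : ℂ)) *
        ((2 / (normSq3 p + 1) : ℝ) : ℂ) ^ 3 * adotom α p ^ (N - 1) := by
  obtain ⟨M, rfl⟩ : ∃ M, N = M + 1 := ⟨N - 1, (Nat.succ_pred_eq_of_pos hN).symm⟩
  have hrq : ∀ q : Fin 3 → ℝ, normSq3 q + 1 ≠ 0 := by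
    intro q; have : (0:ℝ) < normSq3 q + 1 := by unfold normSq3; positivity
    exact ne_of_gt this
  have hr : normSq3 p + 1 ≠ 0 := hrq p
  have hproj : ∀ i : Fin 3, HasFDerivAt (fun q : Fin 3 → ℝ => q i)
      (proj i : (Fin 3 → ℝ) →L[ℝ] ℝ) p := by
    intro i
    exact (ContinuousLinearMap.proj (R := ℝ) (φ := fun _ : Fin 3 => ℝ) i).hasFDerivAt
  set D : (Fin 3 → ℝ) →L[ℝ] ℝ :=
    (2 * p 0) • proj 0 + (2 * p 1) • proj 1 + (2 * p 2) • proj 2 with hD_def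
  have hD : HasFDerivAt normSq3 D p := by
    have h0 := (hasDerivAt_pow 2 (p 0)).comp_hasFDerivAt p (hproj 0)
    have h1 := (hasDerivAt_pow 2 (p 1)).comp_hasFDerivAt p (hproj 1)
    have h2 := (hasDerivAt_pow 2 (p 2)).comp_hasFDerivAt p (hproj 2)
    have := (h0.add h1).add h2
    refine (this.congr_fderiv ?_).congr_of_eventuallyEq (Filter.Eventually.of_forall fun q => ?_)
    · ext q
      simp [hD_def]
    · simp [normSq3]
  -- derivative of s q = 2 / (normSq3 q + 1)
  set DS : (Fin 3 → ℝ) →L[ℝ] ℝ := (2 * -((normSq3 p + 1) ^ 2)⁻¹) • D with hDS_def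
  have hs : HasFDerivAt (fun q => 2 / (normSq3 q + 1)) DS p := by
    have hinv := (hasDerivAt_inv hr).comp_hasFDerivAt p (hD.add_const 1)
    have h2 := hinv.const_mul (2:ℝ)
    have e1 : (fun q : Fin 3 → ℝ => 2 / (normSq3 q + 1)) =
        fun y => 2 * ((fun y => y⁻¹) ∘ fun x : Fin 3 → ℝ => normSq3 x + 1) y := by
      funext q; exact div_eq_mul_inv 2 _
    have e2 : DS = (2:ℝ) • -((normSq3 p + 1) ^ 2)⁻¹ • D := by
      rw [hDS_def, smul_smul]
    rw [e1, e2]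
    exact h2
  set Cs : (Fin 3 → ℝ) →L[ℝ] ℂ := Complex.ofRealCLM.comp DS with hCs_def
  have hc : HasFDerivAt (fun q => ((2 / (normSq3 q + 1) : ℝ) : ℂ)) Cs p :=
    Complex.ofRealCLM.hasFDerivAt.comp p hs
  -- B and its derivative
  set B : (Fin 3 → ℝ) → ℂ := fun q =>
    α 0 * (q 0 : ℂ) + α 1 * (q 1 : ℂ) + α 2 * (q 2 : ℂ) - α 3 with hB_def
  set DB : (Fin 3 → ℝ) →L[ℝ] ℂ :=
    α 0 • (Complex.ofRealCLM.comp (proj 0)) + α 1 • (Complex.ofRealCLM.comp (proj 1)) +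
      α 2 • (Complex.ofRealCLM.comp (proj 2)) with hDB_def
  have hB : HasFDerivAt B DB p := by
    have h : ∀ i : Fin 3, HasFDerivAt (fun q : Fin 3 → ℝ => ((q i : ℝ) : ℂ))
        (Complex.ofRealCLM.comp (proj i)) p :=
      fun i => Complex.ofRealCLM.hasFDerivAt.comp p (hproj i)
    have h0 := (h 0).const_mul (α 0)
    have h1 := (h 1).const_mul (α 1)
    have h2 := (h 2).const_mul (α 2)
    exact ((h0.add h1).add h2).sub_const (α 3)
  -- adotom rewritten
  have key : adotom α = fun q => ((2 / (normSq3 q + 1) : ℝ) : ℂ) * B q + α 3 := by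
    funext q
    have hq := hrq q
    unfold adotom stereoInv
    rw [Fin.sum_univ_four]
    simp only [Matrix.cons_val_zero, Matrix.cons_val_one, Matrix.head_cons, hB_def,
      Matrix.cons_val_two, Matrix.tail_cons, Matrix.cons_val_three]
    have e4 : (normSq3 q - 1) / (normSq3 q + 1) = 1 - 2 / (normSq3 q + 1) := by
      field_simp
      ring
    have e0 : ∀ z : ℝ, 2 * z / (normSq3 q + 1) = z * (2 / (normSq3 q + 1)) := fun z => by
      ring
    rw [e4, e0 (q 0), e0 (q 1), e0 (q 2)]
    push_cast
    ring
  set DA : (Fin 3 → ℝ) →L[ℝ] ℂ :=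
    ((2 / (normSq3 p + 1) : ℝ) : ℂ) • DB + B p • Cs with hDA_def
  have hA : HasFDerivAt (adotom α) DA p := by
    rw [key]
    exact (hc.mul hB).add_const (α 3)
  -- full function
  have hc2 := (hasDerivAt_pow 2 (((2 / (normSq3 p + 1) : ℝ) : ℂ))).comp_hasFDerivAt p hc
  have hAN := (hasDerivAt_pow (M + 1) (adotom α p)).comp_hasFDerivAt p hA
  have hF : HasFDerivAt
      (fun q => ((2 / (normSq3 q + 1) : ℝ) : ℂ) ^ 2 * adotom α q ^ (M + 1))
      ((((2 / (normSq3 p + 1) : ℝ) : ℂ) ^ 2) •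
          (((M + 1 : ℕ) * adotom α p ^ (M + 1 - 1)) • DA) +
        (adotom α p ^ (M + 1)) •
          (((2 : ℕ) * ((2 / (normSq3 p + 1) : ℝ) : ℂ) ^ (2 - 1)) • Cs)) p := hc2.mul hAN
  have hfd := hF.fderiv
  simp only [L3tilde, hfd]
  simp only [add_apply, smul_apply, coe_comp', Function.comp_apply, proj_apply,
    Complex.ofRealCLM_apply, coe_smul', Pi.smul_apply, hDA_def, hDB_def, hCs_def, hDS_def,
    hD_def, hB_def, Pi.single_apply]
  simp only [Fin.isValue, smul_eq_mul, ite_true, ite_false, mul_ite, mul_one, mul_zero]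
  norm_num
  simp only [show ((2:Fin 3) = 0) ↔ False from by decide,
    show ((2:Fin 3) = 1) ↔ False from by decide, if_false, Complex.ofReal_zero,
    mul_zero, add_zero, zero_mul]
  have hrc : ((normSq3 p : ℂ) + 1) ≠ 0 := by
    have : ((normSq3 p + 1 : ℝ) : ℂ) ≠ 0 := by exact_mod_cast hr
    push_cast at this; exact this
  set A := adotom α p with hA_def
  set n := ((normSq3 p : ℝ) : ℂ) with hn_def
  field_simp [hrc]
  ring
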